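/- Let 𝒞 be a model category, X a cofibrant object, f, g, l : X ⟶ Y, and let H : f ⇝ g and H' : g ⇝ l be left Quillen homotopies with Quillen cylinders (W, d₀, d₁, s) and (W', d₀', d₁', s'). Let W'' be the pushout of d₁ : X ⟶ W and d₀' : X ⟶ W' with inclusions α : W ⟶ W'' and β : W' ⟶ W''. Then (W'', α∘d₀, β∘d₁', s'') is a Quillen cylinder for X, where s'' is induced by s and s', and the map h'' : W'' ⟶ Y induced by h and h' is a left Quillen homotopy from f to l. -/

import Mathlib

open CategoryTheory CategoryTheory.Limits

universe v u

/-- A (closed) model structure on a category, following Quillen's axioms M2–M5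
(M1, the existence of finite limits and colimits, is imposed separately as
`HasFiniteLimits`/`HasFiniteColimits` instances when needed). -/
structure ModelStruct (C : Type u) [Category.{v} C] where
  fib : MorphismProperty C
  cof : MorphismProperty C
  weq : MorphismProperty C
  fib_id : ∀ X : C, fib (𝟙 X)
  cof_id : ∀ X : C, cof (𝟙 X)
  weq_id : ∀ X : C, weq (𝟙 X)
  fib_comp : ∀ {X Y Z : C} (f : X ⟶ Y) (g : Y ⟶ Z), fib f → fib g → fib (f ≫ g)
  cof_comp : ∀ {X Y Z : C} (f : X ⟶ Y) (g : Y ⟶ Z), cof f → cof g → cof (f ≫ g)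
  weq_comp : ∀ {X Y Z : C} (f : X ⟶ Y) (g : Y ⟶ Z), weq f → weq g → weq (f ≫ g)
  weq_of_comp_left : ∀ {X Y Z : C} (f : X ⟶ Y) (g : Y ⟶ Z), weq f → weq (f ≫ g) → weq g
  weq_of_comp_right : ∀ {X Y Z : C} (f : X ⟶ Y) (g : Y ⟶ Z), weq g → weq (f ≫ g) → weq f
  fib_retract : ∀ {X Y X' Y' : C} (f : X ⟶ Y) (g : X' ⟶ Y') (a : X ⟶ X') (b : X' ⟶ X)
    (c : Y ⟶ Y') (d : Y' ⟶ Y), a ≫ b = 𝟙 X → c ≫ d = 𝟙 Y → f ≫ c = a ≫ g → g ≫ d = b ≫ f →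
    fib g → fib f
  cof_retract : ∀ {X Y X' Y' : C} (f : X ⟶ Y) (g : X' ⟶ Y') (a : X ⟶ X') (b : X' ⟶ X)
    (c : Y ⟶ Y') (d : Y' ⟶ Y), a ≫ b = 𝟙 X → c ≫ d = 𝟙 Y → f ≫ c = a ≫ g → g ≫ d = b ≫ f →
    cof g → cof f
  weq_retract : ∀ {X Y X' Y' : C} (f : X ⟶ Y) (g : X' ⟶ Y') (a : X ⟶ X') (b : X' ⟶ X)
    (c : Y ⟶ Y') (d : Y' ⟶ Y), a ≫ b = 𝟙 X → c ≫ d = 𝟙 Y → f ≫ c = a ≫ g → g ≫ d = b ≫ f →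
    weq g → weq f
  lift_triv_cof_fib : ∀ {A B X Y : C} (i : A ⟶ B) (p : X ⟶ Y),
    cof i → weq i → fib p → HasLiftingProperty i p
  lift_cof_triv_fib : ∀ {A B X Y : C} (i : A ⟶ B) (p : X ⟶ Y),
    cof i → fib p → weq p → HasLiftingProperty i p
  fact_cof_triv_fib : ∀ {X Y : C} (f : X ⟶ Y), ∃ (Z : C) (i : X ⟶ Z) (p : Z ⟶ Y),
    cof i ∧ fib p ∧ weq p ∧ i ≫ p = f
  fact_triv_cof_fib : ∀ {X Y : C} (f : X ⟶ Y), ∃ (Z : C) (i : X ⟶ Z) (p : Z ⟶ Y),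
    cof i ∧ weq i ∧ fib p ∧ i ≫ p = f

/-- Pushouts of maps with a left lifting property have the lifting property. -/
lemma llp_of_isPushout {C : Type u} [Category.{v} C] {A B D P E F : C}
    {f : A ⟶ B} {g : A ⟶ D} {g' : B ⟶ P} {f' : D ⟶ P} (po : IsPushout f g g' f')
    (p : E ⟶ F) (hg : HasLiftingProperty g p) : HasLiftingProperty g' p := by
  constructor
  intro u v sq
  have w : (f ≫ u) ≫ p = g ≫ (f' ≫ v) := by
    rw [Category.assoc, sq.w, ← Category.assoc, po.w, Category.assoc]
  have sq2 : CommSq (f ≫ u) g p (f' ≫ v) := ⟨w⟩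
  refine ⟨⟨⟨po.desc u sq2.lift sq2.fac_left.symm, po.inl_desc _ _ _, ?_⟩⟩⟩
  apply po.hom_ext
  · rw [← Category.assoc, po.inl_desc, sq.w]
  · rw [← Category.assoc, po.inr_desc, sq2.fac_right]

/-- Retract argument: a map with LLP against all trivial fibrations is a cofibration. -/
lemma cof_of_llp {C : Type u} [Category.{v} C] (M : ModelStruct C) {A B : C} (j : A ⟶ B)
    (H : ∀ {E F : C} (p : E ⟶ F), M.fib p → M.weq p → HasLiftingProperty j p) : M.cof j := by
  obtain ⟨Z, i, p, hi, hp, hpw, hip⟩ := M.fact_cof_triv_fib j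
  have := H p hp hpw
  have sq : CommSq i j p (𝟙 B) := ⟨by rw [hip, Category.comp_id]⟩
  exact M.cof_retract j i (𝟙 A) (𝟙 A) sq.lift p (Category.id_comp _)
    sq.fac_right (by rw [Category.id_comp]; exact sq.fac_left) (by rw [hip, Category.id_comp]) hi

/-- Retract argument: a map with LLP against all fibrations is a trivial cofibration. -/
lemma triv_cof_of_llp {C : Type u} [Category.{v} C] (M : ModelStruct C) {A B : C} (j : A ⟶ B)
    (H : ∀ {E F : C} (p : E ⟶ F), M.fib p → HasLiftingProperty j p) : M.cof j ∧ M.weq j := by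
  obtain ⟨Z, i, p, hi, hiw, hp, hip⟩ := M.fact_triv_cof_fib j
  have := H p hp
  have sq : CommSq i j p (𝟙 B) := ⟨by rw [hip, Category.comp_id]⟩
  constructor
  · exact M.cof_retract j i (𝟙 A) (𝟙 A) sq.lift p (Category.id_comp _)
      sq.fac_right (by rw [Category.id_comp]; exact sq.fac_left) (by rw [hip, Category.id_comp]) hi
  · exact M.weq_retract j i (𝟙 A) (𝟙 A) sq.lift p (Category.id_comp _)
      sq.fac_right (by rw [Category.id_comp]; exact sq.fac_left) (by rw [hip, Category.id_comp]) hiw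

/-- Vertical composition of left Quillen homotopies via the pushout cylinder: if `X` is
cofibrant, `H = (W, d₀, d₁, s, h)` is a Quillen homotopy from `f` to `g` and
`H' = (W', d₀', d₁', s', h')` one from `g` to `l`, and `W''` is the pushout of `d₁` and `d₀'`
with inclusions `α`, `β`, then `(W'', α ∘ d₀, β ∘ d₁', s'')` is a Quillen cylinder for `X`
(where `s''` is induced by `s` and `s'`) and the induced map `h''` is a Quillen homotopy from
`f` to `l`. -/
theorem homotopy_vcomp_pushout {C : Type u} [Category.{v} C] [HasFiniteColimits C]
    (M : ModelStruct C) {X Y : C} (f g l : X ⟶ Y) (hX : M.cof (initial.to X))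
    {W : C} (d₀ d₁ : X ⟶ W) (s : W ⟶ X)
    (hcof : M.cof (coprod.desc d₀ d₁)) (hs : M.weq s)
    (hs₀ : d₀ ≫ s = 𝟙 X) (hs₁ : d₁ ≫ s = 𝟙 X)
    (h : W ⟶ Y) (hh₀ : d₀ ≫ h = f) (hh₁ : d₁ ≫ h = g)
    {W' : C} (d₀' d₁' : X ⟶ W') (s' : W' ⟶ X)
    (hcof' : M.cof (coprod.desc d₀' d₁')) (hs' : M.weq s')
    (hs₀' : d₀' ≫ s' = 𝟙 X) (hs₁' : d₁' ≫ s' = 𝟙 X)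
    (h' : W' ⟶ Y) (hh₀' : d₀' ≫ h' = g) (hh₁' : d₁' ≫ h' = l)
    {W'' : C} (α : W ⟶ W'') (β : W' ⟶ W'') (hpo : IsPushout d₁ d₀' α β)
    (s'' : W'' ⟶ X) (hα : α ≫ s'' = s) (hβ : β ≫ s'' = s')
    (h'' : W'' ⟶ Y) (hαh : α ≫ h'' = h) (hβh : β ≫ h'' = h') :
    M.cof (coprod.desc (d₀ ≫ α) (d₁' ≫ β)) ∧ M.weq s'' ∧
    (d₀ ≫ α) ≫ s'' = 𝟙 X ∧ (d₁' ≫ β) ≫ s'' = 𝟙 X ∧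
    (d₀ ≫ α) ≫ h'' = f ∧ (d₁' ≫ β) ≫ h'' = l := by
  -- basic trivial cofibration facts
  have llp_inl : ∀ {E F : C} (p : E ⟶ F), M.fib p → M.weq p →
      HasLiftingProperty (coprod.inl : X ⟶ X ⨿ X) p := fun p hp hpw =>
    llp_of_isPushout (IsPushout.of_hasBinaryCoproduct' X X) p
      (M.lift_cof_triv_fib _ p hX hp hpw)
  have cof_inl : M.cof (coprod.inl : X ⟶ X ⨿ X) := cof_of_llp M _ llp_inl
  have llp_inr : ∀ {E F : C} (p : E ⟶ F), M.fib p → M.weq p →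
      HasLiftingProperty (coprod.inr : X ⟶ X ⨿ X) p := fun p hp hpw =>
    llp_of_isPushout (IsPushout.of_hasBinaryCoproduct' X X).flip p
      (M.lift_cof_triv_fib _ p hX hp hpw)
  have cof_inr : M.cof (coprod.inr : X ⟶ X ⨿ X) := cof_of_llp M _ llp_inr
  have cof_d₀ : M.cof d₀ := by
    have e : coprod.inl ≫ coprod.desc d₀ d₁ = d₀ := coprod.inl_desc _ _
    rw [← e]; exact M.cof_comp _ _ cof_inl hcof
  have cof_d₁ : M.cof d₁ := by
    have e : coprod.inr ≫ coprod.desc d₀ d₁ = d₁ := coprod.inr_desc _ _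
    rw [← e]; exact M.cof_comp _ _ cof_inr hcof
  have cof_d₀' : M.cof d₀' := by
    have e : coprod.inl ≫ coprod.desc d₀' d₁' = d₀' := coprod.inl_desc _ _
    rw [← e]; exact M.cof_comp _ _ cof_inl hcof'
  have weq_d₀' : M.weq d₀' := M.weq_of_comp_right d₀' s' hs' (by rw [hs₀']; exact M.weq_id X)
  -- α is a trivial cofibration (pushout of the trivial cofibration d₀')
  have hα_tc : M.cof α ∧ M.weq α := triv_cof_of_llp M α (fun p hp =>
    llp_of_isPushout hpo p (M.lift_triv_cof_fib d₀' p cof_d₀' weq_d₀' hp))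
  have weq_s'' : M.weq s'' := M.weq_of_comp_left α s'' hα_tc.2 (by rw [hα]; exact hs)
  -- the structural cofibration of the composite cylinder
  have cof_main : M.cof (coprod.desc (d₀ ≫ α) (d₁' ≫ β)) := by
    apply cof_of_llp M
    intro E F p hp hpw
    have hd₀ := M.lift_cof_triv_fib d₀ p cof_d₀ hp hpw
    have hdesc' := M.lift_cof_triv_fib (coprod.desc d₀' d₁') p hcof' hp hpw
    constructor
    intro u v sq
    have sq1 : CommSq (coprod.inl ≫ u) d₀ p (α ≫ v) := ⟨by
      have := coprod.inl ≫= sq.w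
      simpa [Category.assoc, coprod.inl_desc] using this⟩
    set L := sq1.lift with hL
    have hL1 : d₀ ≫ L = coprod.inl ≫ u := sq1.fac_left
    have hL2 : L ≫ p = α ≫ v := sq1.fac_right
    have sq2 : CommSq (coprod.desc (d₁ ≫ L) (coprod.inr ≫ u)) (coprod.desc d₀' d₁') p
        (β ≫ v) := ⟨by
      apply coprod.hom_ext
      · simp only [coprod.inl_desc_assoc, coprod.inl_desc]
        rw [Category.assoc, hL2, ← Category.assoc, hpo.w, Category.assoc]
      · simp only [coprod.inr_desc_assoc, coprod.inr_desc]
        have := coprod.inr ≫= sq.w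
        simpa [Category.assoc, coprod.inr_desc] using this⟩
    set L' := sq2.lift with hL'
    have hL'1 : coprod.desc d₀' d₁' ≫ L' = coprod.desc (d₁ ≫ L) (coprod.inr ≫ u) :=
      sq2.fac_left
    have hL'2 : L' ≫ p = β ≫ v := sq2.fac_right
    have e0 : d₀' ≫ L' = d₁ ≫ L := by
      have := coprod.inl ≫= hL'1
      simpa [coprod.inl_desc] using this
    have e1 : d₁' ≫ L' = coprod.inr ≫ u := by
      have := coprod.inr ≫= hL'1
      simpa [coprod.inr_desc] using this
    refine ⟨⟨⟨hpo.desc L L' e0.symm, ?_, ?_⟩⟩⟩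
    · apply coprod.hom_ext
      · simp only [coprod.inl_desc_assoc]
        rw [Category.assoc, hpo.inl_desc, hL1]
      · simp only [coprod.inr_desc_assoc]
        rw [Category.assoc, hpo.inr_desc, e1]
    · apply hpo.hom_ext
      · rw [← Category.assoc, hpo.inl_desc, hL2]
      · rw [← Category.assoc, hpo.inr_desc, hL'2]
  refine ⟨cof_main, weq_s'', ?_, ?_, ?_, ?_⟩
  · rw [Category.assoc, hα, hs₀]
  · rw [Category.assoc, hβ, hs₁']
  · rw [Category.assoc, hαh, hh₀]
  · rw [Category.assoc, hβh, hh₁']
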